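/- arXiv:2508.14384 — 6 statements merged into one kernel-verified Lean document; each statement's English description precedes it below -/
import Mathlib

section
/- For any two strings x and y (over possibly different alphabets), the maximal even-palindrome arrays of x and y are equal if and only if the longest even-palindrome arrays of x and y are equal. (Equality of arrays in particular forces |x| = |y|.) -/
/-- The factor `w[i..j]` of `w`, from position `i` to position `j` inclusive
(the empty string when `i > j`). -/
def factor {α : Type*} (w : List α) (i j : ℕ) : List α :=
  (w.drop i).take (j + 1 - i)

/-- A string is a palindrome if it equals its reverse. -/
def IsPal {α : Type*} (l : List α) : Prop := l.reverse = l

/-- `MEPal w c` is the length of the longest palindromic factor of `w` of the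
form `w[c-r..c+r-1]` (with `r ≥ 0`, `c - r ≥ 0`, `c + r ≤ |w|`). -/
noncomputable def MEPal {α : Type*} (w : List α) (c : ℕ) : ℕ :=
  2 * sSup {r : ℕ | r ≤ c ∧ c + r ≤ w.length ∧ IsPal (factor w (c - r) (c + r - 1))}

/-- The maximal even-palindrome array of `w`. -/
noncomputable def MEPalArr {α : Type*} (w : List α) : List ℕ :=
  (List.range w.length).map (MEPal w)

/-- `LEPal w j` is the length of the longest even-length palindromic suffix of
the prefix `w[0..j]`. -/
noncomputable def LEPal {α : Type*} (w : List α) (j : ℕ) : ℕ :=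
  sSup {ℓ : ℕ | ℓ % 2 = 0 ∧ ℓ ≤ j + 1 ∧ IsPal (factor w (j + 1 - ℓ) j)}

/-- The longest even-palindrome array of `w`. -/
noncomputable def LEPalArr {α : Type*} (w : List α) : List ℕ :=
  (List.range w.length).map (LEPal w)

/-- A positive integer `p` is a period of `u` if `u[i] = u[i+p]` for all
`0 ≤ i ≤ |u| - p - 1`. -/
def HasPeriod {α : Type*} (u : List α) (p : ℕ) : Prop :=
  ∀ i, i + p < u.length → u[i]? = u[i + p]?

/-- Pointwise palindromicity of `w[i..i+m-1]`. -/
def EP {α : Type*} (w : List α) (i m : ℕ) : Prop :=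
  ∀ a b, a + b + 1 = m → w[i + a]? = w[i + b]?

lemma EP_zero {α : Type*} (w : List α) (i : ℕ) : EP w i 0 :=
  fun _ _ h => absurd h (by omega)

lemma isPal_iff {α : Type*} (l : List α) :
    IsPal l ↔ ∀ a b, a + b + 1 = l.length → l[a]? = l[b]? := by
  constructor
  · intro h a b hab
    have ha : a < l.length := by omega
    conv_lhs => rw [← h]
    rw [List.getElem?_reverse ha, show l.length - 1 - a = b by omega]
  · intro h
    apply List.ext_getElem?
    intro k
    by_cases hk : k < l.length
    · rw [List.getElem?_reverse hk]
      exact h _ _ (by omega)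
    · rw [List.getElem?_eq_none (by simpa using not_lt.1 hk),
        List.getElem?_eq_none (not_lt.1 hk)]

lemma factor_getElem? {α : Type*} (w : List α) (i j k : ℕ) (hk : k < j + 1 - i) :
    (factor w i j)[k]? = w[i + k]? := by
  unfold factor
  rw [List.getElem?_take, if_pos hk, List.getElem?_drop]

lemma factor_length {α : Type*} (w : List α) (i m : ℕ) (h : i + m ≤ w.length)
    (hm : 1 ≤ m) : (factor w i (i + m - 1)).length = m := by
  unfold factor
  rw [List.length_take, List.length_drop]
  omega

/-- Key characterization: palindromicity of a factor in terms of `EP`. -/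
lemma factor_pal_iff {α : Type*} (w : List α) (i m : ℕ) (h : i + m ≤ w.length) :
    IsPal (factor w i (i + m - 1)) ↔ EP w i m := by
  rcases Nat.eq_zero_or_pos m with rfl | hm
  · constructor
    · intro _; exact EP_zero w i
    · intro _
      rcases Nat.eq_zero_or_pos i with rfl | hi
      · have he : factor w 0 (0 + 0 - 1) = w.take 1 := rfl
        rw [he]
        rcases w with _ | ⟨a, w⟩ <;> simp [IsPal]
      · have he : factor w i (i + 0 - 1) = [] := by
          unfold factor
          rw [show i + 0 - 1 + 1 - i = 0 by omega]
          rfl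
        rw [he]
        simp [IsPal]
  · rw [isPal_iff, factor_length w i m h hm]
    constructor
    · intro hp a b hab
      have := hp a b hab
      rwa [factor_getElem? w i _ a (by omega), factor_getElem? w i _ b (by omega)] at this
    · intro hp a b hab
      rw [factor_getElem? w i _ a (by omega), factor_getElem? w i _ b (by omega)]
      exact hp a b hab

lemma EP_shrink {α : Type*} {w : List α} {i m : ℕ} (h : EP w i m) (d m' : ℕ)
    (hm : m' + 2 * d = m) : EP w (i + d) m' := by
  intro a b hab
  have := h (d + a) (d + b) (by omega)
  rwa [show i + (d + a) = i + d + a by omega, show i + (d + b) = i + d + b by omega] at this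

lemma EP_suffix_iff {α : Type*} {w : List α} {i m : ℕ} (h : EP w i m) (m' : ℕ)
    (hm : m' ≤ m) : EP w (i + (m - m')) m' ↔ EP w i m' := by
  have key : ∀ a b, a + b + 1 = m' → w[i + (m - m') + a]? = w[i + b]? := by
    intro a b hab
    have := h (m - m' + a) b (by omega)
    rwa [show i + (m - m' + a) = i + (m - m') + a by omega] at this
  constructor
  · intro hs a b hab
    have h1 := hs b a (by omega)
    rwa [key b a (by omega), key a b hab] at h1
  · intro hp a b hab
    rw [key a b hab, key b a (by omega)]
    exact hp b a (by omega)

/-- `MEPal` in terms of `EP`. -/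
lemma MEPal_eq {α : Type*} (w : List α) (c : ℕ) :
    MEPal w c = 2 * sSup {r : ℕ | r ≤ c ∧ c + r ≤ w.length ∧ EP w (c - r) (2 * r)} := by
  unfold MEPal
  congr 2
  ext r
  simp only [Set.mem_setOf_eq]
  refine and_congr_right fun h1 => and_congr_right fun h2 => ?_
  rw [show c + r - 1 = (c - r) + 2 * r - 1 by omega]
  exact factor_pal_iff w (c - r) (2 * r) (by omega)

/-- `LEPal` in terms of `EP` (for `j < |w|`). -/
lemma LEPal_eq {α : Type*} (w : List α) (j : ℕ) (hj : j < w.length) :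
    LEPal w j = sSup {ℓ : ℕ | ℓ % 2 = 0 ∧ ℓ ≤ j + 1 ∧ EP w (j + 1 - ℓ) ℓ} := by
  unfold LEPal
  congr 1
  ext ℓ
  simp only [Set.mem_setOf_eq]
  refine and_congr_right fun h1 => and_congr_right fun h2 => ?_
  rw [show j = (j + 1 - ℓ) + ℓ - 1 by omega]
  rw [show j + 1 - ℓ + ℓ - 1 + 1 - ℓ = j + 1 - ℓ by omega]
  exact factor_pal_iff w (j + 1 - ℓ) ℓ (by omega)

section Two
variable {α β : Type*} (x : List α) (y : List β)

def SameEP : Prop :=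
  ∀ i r : ℕ, i + 2 * r ≤ x.length → (EP x i (2 * r) ↔ EP y i (2 * r))

/-- MEPal set membership is downward closed etc. -/
lemma mepal_set_mem_iff {α : Type*} (w : List α) (c : ℕ) (hc : c ≤ w.length) (r : ℕ) :
    (r ≤ c ∧ c + r ≤ w.length ∧ EP w (c - r) (2 * r)) ↔
      r ≤ sSup {r : ℕ | r ≤ c ∧ c + r ≤ w.length ∧ EP w (c - r) (2 * r)} := by
  set S := {r : ℕ | r ≤ c ∧ c + r ≤ w.length ∧ EP w (c - r) (2 * r)} with hS
  have hb : BddAbove S := ⟨c, fun t ht => ht.1⟩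
  have h0 : (0 : ℕ) ∈ S := ⟨Nat.zero_le c, by omega, by simpa using EP_zero w c⟩
  constructor
  · exact fun h => le_csSup hb h
  · intro h
    have hmem : sSup S ∈ S := Nat.sSup_mem ⟨0, h0⟩ hb
    obtain ⟨hs1, hs2, hs3⟩ := hmem
    refine ⟨by omega, by omega, ?_⟩
    have := EP_shrink hs3 (sSup S - r) (2 * r) (by omega)
    rwa [show c - sSup S + (sSup S - r) = c - r by omega] at this

lemma M_to_S (hn : x.length = y.length)
    (hM : ∀ c < x.length, MEPal x c = MEPal y c) : SameEP x y := by
  intro i r hle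
  rcases Nat.eq_zero_or_pos r with rfl | hr
  · simp only [Nat.mul_zero]
    exact iff_of_true (EP_zero x i) (EP_zero y i)
  · set c := i + r with hcdef
    have hc : c < x.length := by omega
    have h2 := hM c hc
    rw [MEPal_eq, MEPal_eq] at h2
    have hsup := Nat.eq_of_mul_eq_mul_left (by norm_num : 0 < 2) h2
    have hx := mepal_set_mem_iff x c (by omega) r
    have hy := mepal_set_mem_iff y c (by omega) r
    rw [show c - r = i by omega] at hx hy
    constructor
    · intro h
      have h1 := hx.1 ⟨by omega, by omega, h⟩
      rw [hsup] at h1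
      exact (hy.2 h1).2.2
    · intro h
      have h1 := hy.1 ⟨by omega, by omega, h⟩
      rw [← hsup] at h1
      exact (hx.2 h1).2.2

lemma S_to_M (hn : x.length = y.length) (hS : SameEP x y) :
    ∀ c < x.length, MEPal x c = MEPal y c := by
  intro c hc
  rw [MEPal_eq, MEPal_eq, ← hn]
  congr 2
  ext r
  simp only [Set.mem_setOf_eq]
  refine and_congr_right fun h1 => and_congr_right fun h2 => ?_
  have := hS (c - r) r (by omega)
  exact this

lemma S_to_L (hn : x.length = y.length) (hS : SameEP x y) :
    ∀ j < x.length, LEPal x j = LEPal y j := by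
  intro j hj
  rw [LEPal_eq x j hj, LEPal_eq y j (hn ▸ hj)]
  congr 1
  ext ℓ
  simp only [Set.mem_setOf_eq]
  refine and_congr_right fun h1 => and_congr_right fun h2 => ?_
  obtain ⟨r, rfl⟩ : ∃ r, ℓ = 2 * r := ⟨ℓ / 2, by omega⟩
  exact hS (j + 1 - 2 * r) r (by omega)

lemma lepal_sSup_mem {α : Type*} (w : List α) (j : ℕ) :
    sSup {ℓ : ℕ | ℓ % 2 = 0 ∧ ℓ ≤ j + 1 ∧ EP w (j + 1 - ℓ) ℓ} ∈
      {ℓ : ℕ | ℓ % 2 = 0 ∧ ℓ ≤ j + 1 ∧ EP w (j + 1 - ℓ) ℓ} := by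
  apply Nat.sSup_mem
  · exact ⟨0, by simp, by omega, by simpa using EP_zero w (j + 1)⟩
  · exact ⟨j + 1, fun t ht => ht.2.1⟩

lemma L_to_S (hn : x.length = y.length)
    (hL : ∀ j < x.length, LEPal x j = LEPal y j) : SameEP x y := by
  suffices key : ∀ j : ℕ, ∀ i r : ℕ, i + 2 * r = j + 1 → j < x.length →
      (EP x i (2 * r) ↔ EP y i (2 * r)) by
    intro i r hle
    rcases Nat.eq_zero_or_pos r with rfl | hr
    · simp only [Nat.mul_zero]
      exact iff_of_true (EP_zero x i) (EP_zero y i)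
    · exact key (i + 2 * r - 1) i r (by omega) (by omega)
  intro j
  induction j using Nat.strong_induction_on with
  | _ j IH =>
    intro i r hir hj
    rcases Nat.eq_zero_or_pos r with rfl | hr
    · simp only [Nat.mul_zero]
      exact iff_of_true (EP_zero x i) (EP_zero y i)
    set m := 2 * r with hm
    set Tx := {ℓ : ℕ | ℓ % 2 = 0 ∧ ℓ ≤ j + 1 ∧ EP x (j + 1 - ℓ) ℓ} with hTx
    set Ty := {ℓ : ℕ | ℓ % 2 = 0 ∧ ℓ ≤ j + 1 ∧ EP y (j + 1 - ℓ) ℓ} with hTy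
    have hsup : sSup Tx = sSup Ty := by
      have := hL j hj
      rwa [LEPal_eq x j hj, LEPal_eq y j (hn ▸ hj)] at this
    set ℓ₀ := sSup Tx with hl0
    have hmx : ℓ₀ ∈ Tx := lepal_sSup_mem x j
    have hmy : ℓ₀ ∈ Ty := hsup ▸ lepal_sSup_mem y j
    have hi : i = j + 1 - m := by omega
    rcases lt_trichotomy m ℓ₀ with hlt | heq | hgt
    · -- strictly inside the maximal suffix palindrome: reflect to a shorter position
      obtain ⟨_, hx2, hx3⟩ := hmx
      obtain ⟨_, hy2, hy3⟩ := hmy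
      have hsx := EP_suffix_iff hx3 m (le_of_lt hlt)
      have hsy := EP_suffix_iff hy3 m (le_of_lt hlt)
      rw [show j + 1 - ℓ₀ + (ℓ₀ - m) = i by omega] at hsx hsy
      have hIH := IH (j - (ℓ₀ - m)) (by omega) (j + 1 - ℓ₀) r
        (by omega) (by omega)
      rw [← hm] at hIH
      rw [← hsx, ← hsy] at hIH
      exact hIH
    · obtain ⟨_, _, hx3⟩ := hmx
      obtain ⟨_, _, hy3⟩ := hmy
      rw [hi, ← heq] at *
      exact iff_of_true hx3 hy3
    · -- longer than the maximal suffix palindrome: false on both sides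
      have hbx : BddAbove Tx := ⟨j + 1, fun t ht => ht.2.1⟩
      have hby : BddAbove Ty := ⟨j + 1, fun t ht => ht.2.1⟩
      constructor
      · intro h
        exfalso
        have : m ∈ Tx := ⟨by omega, by omega, by rwa [← hi]⟩
        have := le_csSup hbx this
        omega
      · intro h
        exfalso
        have : m ∈ Ty := ⟨by omega, by omega, by rwa [← hi]⟩
        have := le_csSup hby this
        rw [← hsup] at this
        omega

end Two

lemma arr_eq_iff {f g : ℕ → ℕ} {nx ny : ℕ} :
    (List.range nx).map f = (List.range ny).map g ↔
      (nx = ny ∧ ∀ c < nx, f c = g c) := by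
  constructor
  · intro h
    have hl : nx = ny := by simpa using congrArg List.length h
    refine ⟨hl, fun c hc => ?_⟩
    have := congrArg (fun l => l[c]?) h
    simp only [List.getElem?_map, List.getElem?_range hc, hl ▸ hc, List.getElem?_range (hl ▸ hc)] at this
    simpa using this
  · rintro ⟨rfl, h⟩
    exact List.map_congr_left fun a ha => h a (List.mem_range.1 ha)

theorem stmt0 {α β : Type*} (x : List α) (y : List β) :
    MEPalArr x = MEPalArr y ↔ LEPalArr x = LEPalArr y := by
  unfold MEPalArr LEPalArr
  rw [arr_eq_iff, arr_eq_iff]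
  constructor
  · rintro ⟨hn, hM⟩
    exact ⟨hn, S_to_L x y hn (M_to_S x y hn hM)⟩
  · rintro ⟨hn, hL⟩
    exact ⟨hn, S_to_M x y hn (L_to_S x y hn hL)⟩
end

section
/- Let x be a string of length n. For j ∈ [0..n−1], define c_j = j + 1 − LEPal_x[j]/2, the center of the longest even-length palindromic suffix of x[0..j] (so c_j = j + 1 when that suffix is empty). Then the sequence (c_0, c_1, …, c_{n−1}) is non-decreasing: j_1 ≤ j_2 implies c_{j_1} ≤ c_{j_2}. -/
lemma pal_middle {α : Type*} {u : List α} (h : IsPal u) (k : ℕ) :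
    IsPal ((u.drop k).take (u.length - 2 * k)) := by
  unfold IsPal at *
  rw [List.reverse_take, List.reverse_drop, h, List.length_drop, List.drop_take]
  rcases le_or_gt (2 * k) u.length with hk | hk
  · have h1 : u.length - k - (u.length - 2 * k) = k := by omega
    rw [h1]
    have h2 : u.length - k - k = u.length - 2 * k := by omega
    rw [h2]
  · have h1 : u.length - 2 * k = 0 := by omega
    simp [h1]

theorem stmt1 {α : Type*} (x : List α) (j1 j2 : ℕ)
    (h12 : j1 ≤ j2) (h2 : j2 < x.length) :
    j1 + 1 - LEPal x j1 / 2 ≤ j2 + 1 - LEPal x j2 / 2 := by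
  have hbdd : ∀ j : ℕ, BddAbove {ℓ : ℕ | ℓ % 2 = 0 ∧ ℓ ≤ j + 1 ∧ IsPal (factor x (j + 1 - ℓ) j)} :=
    fun j => ⟨j + 1, fun ℓ hℓ => hℓ.2.1⟩
  have h0 : ∀ j : ℕ, (0 : ℕ) ∈ {ℓ : ℕ | ℓ % 2 = 0 ∧ ℓ ≤ j + 1 ∧ IsPal (factor x (j + 1 - ℓ) j)} := by
    intro j
    refine ⟨rfl, Nat.zero_le _, ?_⟩
    simp [factor, IsPal]
  have hmem : LEPal x j2 ∈ {ℓ : ℕ | ℓ % 2 = 0 ∧ ℓ ≤ j2 + 1 ∧ IsPal (factor x (j2 + 1 - ℓ) j2)} :=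
    Nat.sSup_mem ⟨0, h0 j2⟩ (hbdd j2)
  generalize hL : LEPal x j2 = ℓ2 at hmem ⊢
  obtain ⟨hev, hle, hpal⟩ := hmem
  obtain ⟨r2, hr2⟩ : ∃ r2, ℓ2 = 2 * r2 := ⟨ℓ2 / 2, by omega⟩
  rcases le_or_gt (j2 - j1) r2 with hcase | hcase
  · -- the restricted middle palindrome
    have key : factor x (j1 + 1 - (ℓ2 - 2 * (j2 - j1))) j1 =
        ((factor x (j2 + 1 - ℓ2) j2).drop (j2 - j1)).take
          ((factor x (j2 + 1 - ℓ2) j2).length - 2 * (j2 - j1)) := by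
      simp only [factor, List.length_take, List.length_drop, List.drop_take, List.take_take,
        List.drop_drop]
      congr 1
      · omega
      · congr 1
        omega
    have hmem' : ℓ2 - 2 * (j2 - j1) ∈
        {ℓ : ℕ | ℓ % 2 = 0 ∧ ℓ ≤ j1 + 1 ∧ IsPal (factor x (j1 + 1 - ℓ) j1)} := by
      refine ⟨by omega, by omega, ?_⟩
      rw [key]
      exact pal_middle hpal (j2 - j1)
    have hge : ℓ2 - 2 * (j2 - j1) ≤ LEPal x j1 := le_csSup (hbdd j1) hmem'
    have := Nat.div_le_div_right (c := 2) hge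
    omega
  · omega
end

section
/- For every n ≥ 1, the number of distinct arrays MEPal_x, as x ranges over all strings of length n over the alphabet ℕ, is at most 2^{2n−2}. -/
-- basic reverse-of-infix lemma
theorem rev_infix {α : Type*} (l : List α) (a b : ℕ) (h : a + b ≤ l.length) :
    ((l.drop a).take b).reverse = (l.reverse.drop (l.length - a - b)).take b := by
  rw [List.reverse_take, List.length_drop, List.reverse_drop, List.drop_take]
  congr 1
  omega

theorem pal_mid {α : Type*} (l : List α) (hl : IsPal l) (a b : ℕ)
    (h : a + b ≤ l.length) (hmid : l.length - a - b = a) :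
    IsPal ((l.drop a).take b) := by
  unfold IsPal at *
  rw [rev_infix l a b h, hl, hmid]

theorem pal_suffix_iff_prefix {α : Type*} (l : List α) (hl : IsPal l) (m : ℕ)
    (h : m ≤ l.length) :
    IsPal ((l.drop (l.length - m)).take m) ↔ IsPal (l.take m) := by
  have h1 : ((l.drop (l.length - m)).take m).reverse = l.take m := by
    rw [rev_infix l _ m (by omega), hl]
    have h2 : l.length - (l.length - m) - m = 0 := by omega
    rw [h2, List.drop_zero]
  have h2 : (l.take m).reverse = (l.drop (l.length - m)).take m := by
    rw [← h1, List.reverse_reverse]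
  unfold IsPal
  rw [h1, h2]
  exact ⟨Eq.symm, Eq.symm⟩

theorem factor_drop {α : Type*} (w : List α) (i j k : ℕ) :
    (factor w i j).drop k = factor w (i + k) j := by
  unfold factor
  rw [List.drop_take, List.drop_drop]
  congr 1
  omega

theorem factor_take {α : Type*} (w : List α) (i j m : ℕ) (hm : 1 ≤ m)
    (h : m ≤ j + 1 - i) :
    (factor w i j).take m = factor w i (i + m - 1) := by
  unfold factor
  rw [List.take_take]
  congr 1
  omega

theorem factor_len {α : Type*} (w : List α) (i j : ℕ) (hj : j < w.length)
    (hij : i ≤ j + 1) : (factor w i j).length = j + 1 - i := by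
  unfold factor
  rw [List.length_take, List.length_drop]
  omega

theorem pal_empty {α : Type*} : IsPal ([] : List α) := rfl

theorem pal_factor_r0 {α : Type*} (w : List α) (c : ℕ) :
    IsPal (factor w c (c - 1)) := by
  cases c with
  | zero =>
    cases w with
    | nil => exact pal_empty
    | cons a t => simp [factor, IsPal]
  | succ c => simp [factor, IsPal, Nat.sub_self]

theorem Lset_bdd {α : Type*} (w : List α) (j : ℕ) :
    BddAbove {ℓ : ℕ | ℓ % 2 = 0 ∧ ℓ ≤ j + 1 ∧ IsPal (factor w (j + 1 - ℓ) j)} :=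
  ⟨j + 1, fun _ hℓ => hℓ.2.1⟩

theorem Lset_zero_mem {α : Type*} (w : List α) (j : ℕ) :
    0 ∈ {ℓ : ℕ | ℓ % 2 = 0 ∧ ℓ ≤ j + 1 ∧ IsPal (factor w (j + 1 - ℓ) j)} := by
  refine ⟨rfl, by omega, ?_⟩
  simp [factor, IsPal, Nat.sub_self]

theorem lepal_mem {α : Type*} (w : List α) (j : ℕ) :
    LEPal w j ∈ {ℓ : ℕ | ℓ % 2 = 0 ∧ ℓ ≤ j + 1 ∧ IsPal (factor w (j + 1 - ℓ) j)} :=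
  Nat.sSup_mem ⟨0, Lset_zero_mem w j⟩ (Lset_bdd w j)

theorem lepal_ge {α : Type*} (w : List α) (j ℓ : ℕ)
    (h : ℓ ∈ {ℓ : ℕ | ℓ % 2 = 0 ∧ ℓ ≤ j + 1 ∧ IsPal (factor w (j + 1 - ℓ) j)}) :
    ℓ ≤ LEPal w j :=
  le_csSup (Lset_bdd w j) h

theorem lepal_even {α : Type*} (w : List α) (j : ℕ) : LEPal w j % 2 = 0 :=
  (lepal_mem w j).1

theorem lepal_le {α : Type*} (w : List α) (j : ℕ) : LEPal w j ≤ j + 1 :=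
  (lepal_mem w j).2.1

theorem lepal_zero {α : Type*} (w : List α) : LEPal w 0 = 0 := by
  have h := lepal_mem w 0
  have h1 := h.1
  have h2 := h.2.1
  omega

theorem lepal_succ {α : Type*} (w : List α) (j : ℕ) (hj : j + 1 < w.length) :
    LEPal w (j + 1) ≤ LEPal w j + 2 := by
  obtain ⟨hev, hle, hpal⟩ := lepal_mem w (j + 1)
  set L := LEPal w (j + 1) with hLdef
  rcases Nat.lt_or_ge L 3 with hL3 | hL3
  · omega
  · have hmid : IsPal (((factor w (j + 1 + 1 - L) (j + 1)).drop 1).take (L - 2)) := by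
      apply pal_mid _ hpal 1 (L - 2) <;>
        rw [factor_len w _ _ hj (by omega)] <;> omega
    have e1 : ((factor w (j + 1 + 1 - L) (j + 1)).drop 1).take (L - 2)
        = factor w (j + 1 + 1 - L + 1) (j + 1 + 1 - L + 1 + (L - 2) - 1) := by
      rw [factor_drop, factor_take w _ _ _ (by omega) (by omega)]
    rw [e1] at hmid
    have hLm2 : L - 2 ≤ LEPal w j := by
      apply lepal_ge
      refine ⟨by omega, by omega, ?_⟩
      convert hmid using 2 <;> omega
    omega

theorem trans_center {α : Type*} (w : List α) {j L r : ℕ} (hj : j < w.length)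
    (hr : 1 ≤ r) (h2r : 2 * r ≤ L) (hLle : L ≤ j + 1)
    (hQ : IsPal (factor w (j + 1 - L) j)) :
    (IsPal (factor w (j + 1 - 2 * r) j) ↔
      IsPal (factor w (j + 1 - L) (j + 1 - L + 2 * r - 1))) := by
  set Q := factor w (j + 1 - L) j with hQdef
  have hlen : Q.length = L := by
    rw [hQdef, factor_len w _ _ hj (by omega)]; omega
  have hsuf : (Q.drop (Q.length - 2 * r)).take (2 * r) = factor w (j + 1 - 2 * r) j := by
    rw [hlen, hQdef, factor_drop]
    have e1 : j + 1 - L + (L - 2 * r) = j + 1 - 2 * r := by omega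
    rw [e1]
    apply List.take_of_length_le
    rw [factor_len w _ _ hj (by omega)]
    omega
  have hpre : Q.take (2 * r) = factor w (j + 1 - L) (j + 1 - L + 2 * r - 1) := by
    rw [hQdef, factor_take w _ _ _ (by omega) (by omega)]
  rw [← hsuf, ← hpre]
  exact pal_suffix_iff_prefix Q hQ (2 * r) (by omega)

theorem forward {α : Type*} (n : ℕ) (x y : List α) (hx : x.length = n)
    (hy : y.length = n) (hLE : ∀ j, j < n → LEPal x j = LEPal y j) :
    ∀ c r, (r ≤ c ∧ c + r ≤ n ∧ IsPal (factor x (c - r) (c + r - 1))) →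
      (r ≤ c ∧ c + r ≤ n ∧ IsPal (factor y (c - r) (c + r - 1))) := by
  intro c
  induction c using Nat.strong_induction_on with
  | _ c IH =>
    rintro r ⟨hrc, hcr, hpal⟩
    refine ⟨hrc, hcr, ?_⟩
    rcases Nat.eq_zero_or_pos r with h0 | hr
    · subst h0
      have := pal_factor_r0 y c
      simpa using this
    · set j := c + r - 1 with hjdef
      have hj : j < n := by omega
      have hjx : j < x.length := by omega
      have hjy : j < y.length := by omega
      have hmem : 2 * r ∈ {ℓ : ℕ | ℓ % 2 = 0 ∧ ℓ ≤ j + 1 ∧ IsPal (factor x (j + 1 - ℓ) j)} := by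
        refine ⟨by omega, by omega, ?_⟩
        have e1 : j + 1 - 2 * r = c - r := by omega
        rw [e1]
        exact hpal
      set L := LEPal x j with hLdef
      have hL2r : 2 * r ≤ L := lepal_ge x j _ hmem
      obtain ⟨hLev, hLle, hQx⟩ := lepal_mem x j
      have hLy : LEPal y j = L := (hLE j hj).symm
      have hQy : IsPal (factor y (j + 1 - L) j) := by
        have h := (lepal_mem y j).2.2
        rw [hLy] at h
        exact h
      have hLley : L ≤ j + 1 := by
        have := lepal_le y j
        omega
      -- transfer on x side
      have hx1 : IsPal (factor x (j + 1 - 2 * r) j) := by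
        have e1 : j + 1 - 2 * r = c - r := by omega
        rw [e1]
        exact hpal
      have hx2 : IsPal (factor x (j + 1 - L) (j + 1 - L + 2 * r - 1)) :=
        (trans_center x hjx hr hL2r hLle hQx).mp hx1
      have hy2 : IsPal (factor y (j + 1 - L) (j + 1 - L + 2 * r - 1)) := by
        rcases Nat.eq_or_lt_of_le hL2r with hEq | hLgt
        · have e1 : j + 1 - L + 2 * r - 1 = j := by omega
          rw [e1]
          exact hQy
        · set c' := j + 1 - L + r with hc'def
          have hc' : c' < c := by omega
          have hPx' : r ≤ c' ∧ c' + r ≤ n ∧ IsPal (factor x (c' - r) (c' + r - 1)) := by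
            refine ⟨by omega, by omega, ?_⟩
            have e1 : c' - r = j + 1 - L := by omega
            have e2 : c' + r - 1 = j + 1 - L + 2 * r - 1 := by omega
            rw [e1, e2]
            exact hx2
          obtain ⟨_, _, hpy⟩ := IH c' hc' r hPx'
          have e1 : c' - r = j + 1 - L := by omega
          have e2 : c' + r - 1 = j + 1 - L + 2 * r - 1 := by omega
          rw [e1, e2] at hpy
          exact hpy
      have hy1 : IsPal (factor y (j + 1 - 2 * r) j) :=
        (trans_center y hjy hr hL2r hLley hQy).mpr hy2
      have e1 : j + 1 - 2 * r = c - r := by omega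
      have e2 : (j : ℕ) = c + r - 1 := by omega
      rw [e1, e2] at hy1
      exact hy1

theorem mepal_arr_eq {α : Type*} (n : ℕ) (x y : List α) (hx : x.length = n)
    (hy : y.length = n) (hLE : ∀ j, j < n → LEPal x j = LEPal y j) :
    ∀ c, MEPal x c = MEPal y c := by
  intro c
  unfold MEPal
  congr 1
  apply congrArg sSup
  ext r
  constructor
  · intro h
    have h' : r ≤ c ∧ c + r ≤ n ∧ IsPal (factor x (c - r) (c + r - 1)) := by
      rw [← hx]; exact h
    have := forward n x y hx hy hLE c r h'
    rw [← hy] at this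
    exact this
  · intro h
    have h' : r ≤ c ∧ c + r ≤ n ∧ IsPal (factor y (c - r) (c + r - 1)) := by
      rw [← hy]; exact h
    have := forward n y x hy hx (fun j hj => (hLE j hj).symm) c r h'
    rw [← hx] at this
    exact this

theorem mono_of_strict (m : ℕ) (F : ℕ → ℕ) (hF : ∀ k, k + 1 < m → F k < F (k + 1)) :
    ∀ i j, i ≤ j → j < m → F i ≤ F j := by
  intro i j hij hjm
  induction j with
  | zero => have : i = 0 := by omega
            simp [this]
  | succ j IHj =>
    rcases Nat.lt_or_ge i (j + 1) with h | h
    · exact le_trans (IHj (by omega) (by omega)) (le_of_lt (hF j (by omega)))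
    · have : i = j + 1 := by omega
      simp [this]

theorem image_inj (m : ℕ) : ∀ (f g : ℕ → ℕ),
    (∀ k, k + 1 < m → f k < f (k + 1)) → (∀ k, k + 1 < m → g k < g (k + 1)) →
    (Finset.range m).image f = (Finset.range m).image g →
    ∀ k, k < m → f k = g k := by
  induction m with
  | zero => intro f g _ _ _ k hk; omega
  | succ m IHm =>
    intro f g hf hg h
    have hfm : f m ∈ (Finset.range (m + 1)).image g := by
      rw [← h]
      exact Finset.mem_image_of_mem f (Finset.mem_range.mpr (by omega))
    obtain ⟨i, hi, hgi⟩ := Finset.mem_image.mp hfm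
    have hgm : g m ∈ (Finset.range (m + 1)).image f := by
      rw [h]
      exact Finset.mem_image_of_mem g (Finset.mem_range.mpr (by omega))
    obtain ⟨i', hi', hfi'⟩ := Finset.mem_image.mp hgm
    have h1 : f m ≤ g m := by
      rw [← hgi]
      exact mono_of_strict (m + 1) g hg i m (by exact Nat.lt_succ_iff.mp (Finset.mem_range.mp hi)) (by omega)
    have h2 : g m ≤ f m := by
      rw [← hfi']
      exact mono_of_strict (m + 1) f hf i' m (by exact Nat.lt_succ_iff.mp (Finset.mem_range.mp hi')) (by omega)
    have hfg : f m = g m := le_antisymm h1 h2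
    have hfnot : f m ∉ (Finset.range m).image f := by
      intro hmem
      obtain ⟨i0, hi0, hfi0⟩ := Finset.mem_image.mp hmem
      have hi0m : i0 < m := Finset.mem_range.mp hi0
      have h3 : f i0 ≤ f (m - 1) :=
        mono_of_strict (m + 1) f hf i0 (m - 1) (by omega) (by omega)
      have h4 : f (m - 1) < f m := by
        have := hf (m - 1) (by omega)
        have e : m - 1 + 1 = m := by omega
        rwa [e] at this
      omega
    have hgnot : g m ∉ (Finset.range m).image g := by
      intro hmem
      obtain ⟨i0, hi0, hgi0⟩ := Finset.mem_image.mp hmem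
      have hi0m : i0 < m := Finset.mem_range.mp hi0
      have h3 : g i0 ≤ g (m - 1) :=
        mono_of_strict (m + 1) g hg i0 (m - 1) (by omega) (by omega)
      have h4 : g (m - 1) < g m := by
        have := hg (m - 1) (by omega)
        have e : m - 1 + 1 = m := by omega
        rwa [e] at this
      omega
    have hrest : (Finset.range m).image f = (Finset.range m).image g := by
      have h1 : (Finset.range (m + 1)).image f = insert (f m) ((Finset.range m).image f) := by
        rw [Finset.range_add_one, Finset.image_insert]
      have h2 : (Finset.range (m + 1)).image g = insert (g m) ((Finset.range m).image g) := by
        rw [Finset.range_add_one, Finset.image_insert]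
      rw [h1, h2, hfg] at h
      have := congrArg (fun s => Finset.erase s (g m)) h
      simpa [Finset.erase_insert (hfg ▸ hfnot), Finset.erase_insert hgnot] using this
    intro k hk
    rcases Nat.lt_or_ge k m with h' | h'
    · exact IHm f g (fun k hk => hf k (by omega)) (fun k hk => hg k (by omega)) hrest k h'
    · have : k = m := by omega
      rw [this, hfg]


theorem lepal_div_le (w : List ℕ) (n : ℕ) (hw : w.length = n) :
    ∀ k, k < n → LEPal w k / 2 ≤ k := by
  intro k
  induction k with
  | zero => intro _; rw [lepal_zero]
  | succ k IHk =>
    intro hk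
    have h1 : LEPal w (k + 1) ≤ LEPal w k + 2 := lepal_succ w k (by omega)
    have h2 := IHk (by omega)
    omega

theorem mepal_arr_eq' (n : ℕ) (x y : List ℕ) (hx : x.length = n)
    (hy : y.length = n)
    (henc : (Finset.range (n - 1)).image (fun k => 2 * k + 1 - LEPal x (k + 1) / 2)
      = (Finset.range (n - 1)).image (fun k => 2 * k + 1 - LEPal y (k + 1) / 2)) :
    MEPalArr x = MEPalArr y := by
  have hstrict : ∀ (w : List ℕ), w.length = n → ∀ k, k + 1 < n - 1 →
      (fun k => 2 * k + 1 - LEPal w (k + 1) / 2) k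
        < (fun k => 2 * k + 1 - LEPal w (k + 1) / 2) (k + 1) := by
    intro w hw k hk
    simp only
    have h1 : LEPal w (k + 1 + 1) ≤ LEPal w (k + 1) + 2 := lepal_succ w (k + 1) (by omega)
    have h2 : LEPal w (k + 1) / 2 ≤ k + 1 := lepal_div_le w n hw (k + 1) (by omega)
    have h3 : LEPal w (k + 1) % 2 = 0 := lepal_even w (k + 1)
    have h4 : LEPal w (k + 1 + 1) % 2 = 0 := lepal_even w (k + 1 + 1)
    omega
  have hpt := image_inj (n - 1) _ _ (hstrict x hx) (hstrict y hy) henc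
  have hLE : ∀ j, j < n → LEPal x j = LEPal y j := by
    intro j hj
    cases j with
    | zero => rw [lepal_zero, lepal_zero]
    | succ k =>
      have h := hpt k (by omega)
      have h2x : LEPal x (k + 1) / 2 ≤ k + 1 := lepal_div_le x n hx (k + 1) hj
      have h2y : LEPal y (k + 1) / 2 ≤ k + 1 := lepal_div_le y n hy (k + 1) hj
      have h3x : LEPal x (k + 1) % 2 = 0 := lepal_even x (k + 1)
      have h3y : LEPal y (k + 1) % 2 = 0 := lepal_even y (k + 1)
      omega
  unfold MEPalArr
  rw [hx, hy]
  exact List.map_congr_left fun c _ => mepal_arr_eq n x y hx hy hLE c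

theorem stmt2 (n : ℕ) (hn : 1 ≤ n) :
    {A : List ℕ | ∃ x : List ℕ, x.length = n ∧ MEPalArr x = A}.Finite ∧
    {A : List ℕ | ∃ x : List ℕ, x.length = n ∧ MEPalArr x = A}.ncard ≤ 2 ^ (2 * n - 2) := by
  classical
  set S := {A : List ℕ | ∃ x : List ℕ, x.length = n ∧ MEPalArr x = A} with hSdef
  set enc : List ℕ → Finset ℕ :=
    fun w => (Finset.range (n - 1)).image (fun k => 2 * k + 1 - LEPal w (k + 1) / 2)
    with hencdef
  set F : List ℕ → Finset ℕ :=
    fun A => if h : ∃ x : List ℕ, x.length = n ∧ MEPalArr x = A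
      then enc h.choose else (∅ : Finset ℕ) with hFdef
  have hinj : Set.InjOn F S := by
    intro A₁ hA₁ A₂ hA₂ hF
    have h₁ : ∃ x : List ℕ, x.length = n ∧ MEPalArr x = A₁ := hA₁
    have h₂ : ∃ x : List ℕ, x.length = n ∧ MEPalArr x = A₂ := hA₂
    rw [hFdef] at hF
    simp only [dif_pos h₁, dif_pos h₂] at hF
    obtain ⟨hx₁, hA₁'⟩ := h₁.choose_spec
    obtain ⟨hx₂, hA₂'⟩ := h₂.choose_spec
    rw [← hA₁', ← hA₂']
    exact mepal_arr_eq' n _ _ hx₁ hx₂ hF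
  have himg : F '' S ⊆ ↑((Finset.range (2 * n - 2)).powerset) := by
    rintro _ ⟨A, hA, rfl⟩
    have h₁ : ∃ x : List ℕ, x.length = n ∧ MEPalArr x = A := hA
    rw [hFdef]
    simp only [dif_pos h₁]
    rw [Finset.mem_coe, Finset.mem_powerset]
    obtain ⟨hx₁, _⟩ := h₁.choose_spec
    set x := h₁.choose
    intro a ha
    rw [hencdef] at ha
    obtain ⟨k, hk, hpk⟩ := Finset.mem_image.mp ha
    have hk' : k < n - 1 := Finset.mem_range.mp hk
    rw [Finset.mem_range, ← hpk]
    omega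
  have hfin : S.Finite :=
    Set.Finite.of_finite_image
      (Set.Finite.subset ((Finset.range (2 * n - 2)).powerset).finite_toSet himg) hinj
  refine ⟨hfin, ?_⟩
  calc S.ncard = (F '' S).ncard := (Set.ncard_image_of_injOn hinj).symm
    _ ≤ (↑((Finset.range (2 * n - 2)).powerset) : Set (Finset ℕ)).ncard :=
        Set.ncard_le_ncard himg ((Finset.range (2 * n - 2)).powerset).finite_toSet
    _ = 2 ^ (2 * n - 2) := by
        rw [Set.ncard_coe_finset, Finset.card_powerset, Finset.card_range]
end

section
/- Let w be a string, let r ≥ 1, and let c_1 < c_2 be integers with c_2 − c_1 ≤ r, c_1 − r ≥ 0 and c_2 + r ≤ |w|. If both w[c_1−r..c_1+r−1] and w[c_2−r..c_2+r−1] are palindromes, then the factor w[c_1−r..c_2+r−1] has period 2(c_2 − c_1). -/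
lemma pal_reflect {α : Type*} (w : List α) (a n x y : ℕ) (hn : a + n ≤ w.length)
    (hp : IsPal ((w.drop a).take n)) (hx : a ≤ x) (hx2 : x < a + n)
    (hxy : x + y + 1 = 2 * a + n) : w[x]? = w[y]? := by
  set l := (w.drop a).take n with hl
  have hlen : l.length = n := by
    simp [hl, List.length_take, List.length_drop]
    omega
  have key : ∀ k, k < n → l[k]? = w[a + k]? := by
    intro k hk
    rw [hl, List.getElem?_take, if_pos hk, List.getElem?_drop]
  have h1 : l[x - a]? = w[x]? := by
    rw [key _ (by omega)]; congr 1; omega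
  have h2 : l[n - 1 - (x - a)]? = w[y]? := by
    rw [key _ (by omega)]; congr 1; omega
  have h3 : l[x - a]? = l[n - 1 - (x - a)]? := by
    conv_lhs => rw [← hp]
    rw [List.getElem?_reverse (by omega), hlen]
  rw [← h1, h3, h2]

theorem stmt3 {α : Type*} (w : List α) (r c1 c2 : ℕ) (hr : 1 ≤ r)
    (h12 : c1 < c2) (hdist : c2 - c1 ≤ r) (h1 : r ≤ c1) (h2 : c2 + r ≤ w.length)
    (p1 : IsPal (factor w (c1 - r) (c1 + r - 1)))
    (p2 : IsPal (factor w (c2 - r) (c2 + r - 1))) :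
    HasPeriod (factor w (c1 - r) (c2 + r - 1)) (2 * (c2 - c1)) := by
  intro i hi
  set d := c2 - c1 with hd
  -- length of the factor
  have hN : (c1 + r - 1) + 1 - (c1 - r) = 2 * r := by omega
  have hN2 : (c2 + r - 1) + 1 - (c2 - r) = 2 * r := by omega
  rw [factor, hN] at p1
  rw [factor, hN2] at p2
  have hlen : (factor w (c1 - r) (c2 + r - 1)).length = d + 2 * r := by
    simp [factor, List.length_take, List.length_drop]
    omega
  rw [hlen] at hi
  have key : ∀ k, k < d + 2 * r → (factor w (c1 - r) (c2 + r - 1))[k]? = w[(c1 - r) + k]? := by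
    intro k hk
    rw [factor, List.getElem?_take, if_pos (by omega), List.getElem?_drop]
  rw [key i (by omega), key (i + 2 * (c2 - c1)) (by omega)]
  have step1 : w[(c1 - r) + i]? = w[(c1 - r) + (2 * r - 1 - i)]? :=
    pal_reflect w (c1 - r) (2 * r) _ _ (by omega) p1 (by omega) (by omega) (by omega)
  have step2 : w[(c1 - r) + (2 * r - 1 - i)]? = w[(c1 - r) + (i + 2 * (c2 - c1))]? :=
    pal_reflect w (c2 - r) (2 * r) _ _ (by omega) p2 (by omega) (by omega) (by omega)
  rw [step1, step2]
end

section
/- Let w be a string of length n, let τ ≥ 1, and let B = [b..b+τ−1] ⊆ [0..n−1] be an interval of τ consecutive integers. Let L = {c ∈ B : MEPal_w[c] > 2τ} be the set of centers in B of maximal even-palindromes of length greater than 2τ. If |L| ≥ 3 and L = {c_1 < c_2 < … < c_N}, then the differences c_{i+1} − c_i are equal for all i ∈ [1..N−1]; that is, L is an arithmetic progression. -/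
section Aux
variable {α : Type*} {β : Type*}

/-- Pointwise palindromic condition: mirror positions around center `c`
(within radius `ρ`) carry equal letters. -/
def Pw (w : List α) (c ρ : ℕ) : Prop :=
  ∀ s t : ℕ, s + t + 1 = 2 * c → c ≤ s + ρ → s < c + ρ → w[s]? = w[t]?

lemma pal_pointwise {w : List α} {c ρ : ℕ} (h1 : ρ ≤ c) (h2 : c + ρ ≤ w.length)
    (hpal : IsPal (factor w (c - ρ) (c + ρ - 1))) : Pw w c ρ := by
  intro s t hst hs1 hs2
  rcases Nat.eq_zero_or_pos ρ with hρ | hρ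
  · omega
  have hfact : factor w (c - ρ) (c + ρ - 1) = (w.drop (c - ρ)).take (2 * ρ) := by
    unfold factor; congr 1; omega
  set u := (w.drop (c - ρ)).take (2 * ρ) with hu
  have hlenw : (w.drop (c - ρ)).length = w.length - (c - ρ) := List.length_drop
  have hlen : u.length = 2 * ρ := by
    rw [hu, List.length_take, hlenw]; omega
  have hrev : u.reverse = u := by rw [← hfact]; exact hpal
  set k := s - (c - ρ) with hk
  have hk2 : k < 2 * ρ := by omega
  have e1 : u[k]? = w[s]? := by
    rw [hu, List.getElem?_take, if_pos hk2, List.getElem?_drop]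
    congr 1; omega
  have e2 : u[k]? = w[t]? := by
    conv_lhs => rw [← hrev]
    rw [List.getElem?_reverse (by rw [hlen]; exact hk2), hlen,
      hu, List.getElem?_take, if_pos (by omega), List.getElem?_drop]
    congr 1; omega
  exact e1.symm.trans e2

lemma pw_isPal {w : List α} {c ρ : ℕ} (hρ : 0 < ρ) (h1 : ρ ≤ c) (h2 : c + ρ ≤ w.length)
    (hpw : Pw w c ρ) : IsPal (factor w (c - ρ) (c + ρ - 1)) := by
  have hfact : factor w (c - ρ) (c + ρ - 1) = (w.drop (c - ρ)).take (2 * ρ) := by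
    unfold factor; congr 1; omega
  rw [hfact]
  set u := (w.drop (c - ρ)).take (2 * ρ) with hu
  have hlenw : (w.drop (c - ρ)).length = w.length - (c - ρ) := List.length_drop
  have hlen : u.length = 2 * ρ := by
    rw [hu, List.length_take, hlenw]; omega
  apply List.ext_getElem?
  intro k
  by_cases hk : k < 2 * ρ
  · have eL : u.reverse[k]? = w[c + ρ - 1 - k]? := by
      rw [List.getElem?_reverse (by rw [hlen]; exact hk), hlen,
        hu, List.getElem?_take, if_pos (by omega), List.getElem?_drop]
      congr 1; omega
    have eR : u[k]? = w[c - ρ + k]? := by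
      rw [hu, List.getElem?_take, if_pos hk, List.getElem?_drop]
    rw [eL, eR]
    exact hpw (c + ρ - 1 - k) (c - ρ + k) (by omega) (by omega) (by omega)
  · rw [List.getElem?_eq_none (by rw [List.length_reverse, hlen]; omega),
      List.getElem?_eq_none (by rw [hlen]; omega)]

lemma mepal_extract {w : List α} {c τ : ℕ} (h : 2 * τ < MEPal w c) :
    τ + 1 ≤ c ∧ c + (τ + 1) ≤ w.length ∧ Pw w c (τ + 1) := by
  unfold MEPal at h
  set S := {r : ℕ | r ≤ c ∧ c + r ≤ w.length ∧ IsPal (factor w (c - r) (c + r - 1))} with hS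
  have hbdd : BddAbove S := ⟨c, fun x hx => hx.1⟩
  have hne : S.Nonempty := by
    by_contra hne
    rw [Set.not_nonempty_iff_eq_empty] at hne
    rw [hne] at h
    rw [csSup_empty] at h
    simp only [Nat.bot_eq_zero] at h
    omega
  have hmem := Nat.sSup_mem hne hbdd
  set r := sSup S with hr
  have hrτ : τ + 1 ≤ r := by omega
  obtain ⟨hr1, hr2, hr3⟩ := hmem
  have hpw : Pw w c r := pal_pointwise hr1 hr2 hr3
  exact ⟨by omega, by omega, fun s t hst hs1 hs2 => hpw s t hst (by omega) (by omega)⟩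

lemma mepal_intro {w : List α} {c τ : ℕ} (hc : τ + 1 ≤ c) (hlen : c + (τ + 1) ≤ w.length)
    (hpw : Pw w c (τ + 1)) : 2 * τ < MEPal w c := by
  unfold MEPal
  set S := {r : ℕ | r ≤ c ∧ c + r ≤ w.length ∧ IsPal (factor w (c - r) (c + r - 1))} with hS
  have hbdd : BddAbove S := ⟨c, fun x hx => hx.1⟩
  have hmem : τ + 1 ∈ S := ⟨by omega, by omega, pw_isPal (by omega) (by omega) hlen hpw⟩
  have := le_csSup hbdd hmem
  omega

lemma two_pals_period {w : List α} {τ c c' : ℕ} (hc : τ + 1 ≤ c) (hcc : c < c')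
    (P : Pw w c (τ + 1)) (P' : Pw w c' (τ + 1)) :
    ∀ i, c ≤ i + τ → i + 2 * (c' - c) ≤ c' + τ → w[i]? = w[i + 2 * (c' - c)]? := by
  intro i hi1 hi2
  have e1 : w[i]? = w[2 * c - 1 - i]? :=
    P i (2 * c - 1 - i) (by omega) (by omega) (by omega)
  have e2 : w[2 * c - 1 - i]? = w[i + 2 * (c' - c)]? :=
    P' (2 * c - 1 - i) (i + 2 * (c' - c)) (by omega) (by omega) (by omega)
  exact e1.trans e2

/-- Fine–Wilf style lemma (weak form, length ≥ p + q). -/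
lemma fw (f : ℕ → β) : ∀ (fuel p q a z : ℕ), p + q ≤ fuel → 0 < p → 0 < q →
    a + p + q ≤ z + 1 →
    (∀ i, a ≤ i → i + p ≤ z → f i = f (i + p)) →
    (∀ i, a ≤ i → i + q ≤ z → f i = f (i + q)) →
    ∀ i, a ≤ i → i + Nat.gcd p q ≤ z → f i = f (i + Nat.gcd p q) := by
  intro fuel
  induction fuel with
  | zero => intro p q a z h hp hq; omega
  | succ n ih =>
    intro p q a z hfuel hp hq hlen Hp Hq
    rcases Nat.lt_trichotomy p q with h | h | h
    · have hg : Nat.gcd p (q - p) = Nat.gcd p q := by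
        conv_rhs => rw [show q = (q - p) + p by omega]
        rw [Nat.gcd_add_self_right]
      have Hq' : ∀ i, a ≤ i → i + (q - p) ≤ z → f i = f (i + (q - p)) := by
        intro i hai hiz
        by_cases hcase : i + q ≤ z
        · have e1 := Hp (i + (q - p)) (by omega) (by omega)
          have e2 := Hq i hai hcase
          rw [show i + (q - p) + p = i + q by omega] at e1
          exact e2.trans e1.symm
        · have e1 := Hp (i - p) (by omega) (by omega)
          have e2 := Hq (i - p) (by omega) (by omega)
          rw [show i - p + p = i by omega] at e1
          rw [show i - p + q = i + (q - p) by omega] at e2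
          exact e1.symm.trans e2
      have := ih p (q - p) a z (by omega) hp (by omega) (by omega) Hp Hq'
      rw [hg] at this
      exact this
    · subst h
      rw [Nat.gcd_self]
      exact Hp
    · have hg : Nat.gcd (p - q) q = Nat.gcd p q := by
        conv_rhs => rw [show p = (p - q) + q by omega]
        rw [Nat.gcd_add_self_left]
      have Hp' : ∀ i, a ≤ i → i + (p - q) ≤ z → f i = f (i + (p - q)) := by
        intro i hai hiz
        by_cases hcase : i + p ≤ z
        · have e1 := Hq (i + (p - q)) (by omega) (by omega)
          have e2 := Hp i hai hcase
          rw [show i + (p - q) + q = i + p by omega] at e1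
          exact e2.trans e1.symm
        · have e1 := Hq (i - q) (by omega) (by omega)
          have e2 := Hp (i - q) (by omega) (by omega)
          rw [show i - q + q = i by omega] at e1
          rw [show i - q + p = i + (p - q) by omega] at e2
          exact e1.symm.trans e2
      have := ih (p - q) q a z (by omega) (by omega) hq (by omega) Hp' Hq
      rw [hg] at this
      exact this

/-- Extend a period `G` valid on `[A, z]` to the left down to `a`,
using a period `P` valid on `[a, z]`. -/
lemma extL (f : ℕ → β) (P G a A z : ℕ) (hP : 0 < P) (hsub : A + P + G ≤ z + 1)
    (HP : ∀ i, a ≤ i → i + P ≤ z → f i = f (i + P))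
    (HG : ∀ i, A ≤ i → i + G ≤ z → f i = f (i + G)) :
    ∀ i, a ≤ i → i + G ≤ z → f i = f (i + G) := by
  have key : ∀ k i, a ≤ i → i + G ≤ z → A ≤ i + k → f i = f (i + G) := by
    intro k
    induction k with
    | zero => intro i h1 h2 h3; exact HG i (by omega) h2
    | succ n ih =>
      intro i h1 h2 h3
      by_cases hA : A ≤ i
      · exact HG i hA h2
      · have e1 := HP i h1 (by omega)
        have e2 := ih (i + P) (by omega) (by omega) (by omega)
        have e3 := HP (i + G) (by omega) (by omega)
        rw [show i + P + G = i + G + P by omega] at e2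
        exact (e1.trans e2).trans e3.symm
  intro i h1 h2
  exact key A i h1 h2 (by omega)

/-- Extend a period `G` valid on `[a, Z]` to the right up to `z`,
using a period `P` valid on `[a, z]`. -/
lemma extR (f : ℕ → β) (P G a z Z : ℕ) (hP : 0 < P) (hsub : a + P + G ≤ Z + 1) (hZ : Z ≤ z)
    (HP : ∀ i, a ≤ i → i + P ≤ z → f i = f (i + P))
    (HG : ∀ i, a ≤ i → i + G ≤ Z → f i = f (i + G)) :
    ∀ i, a ≤ i → i + G ≤ z → f i = f (i + G) := by
  have key : ∀ k i, a ≤ i → i + G ≤ z → i + G ≤ Z + k → f i = f (i + G) := by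
    intro k
    induction k with
    | zero => intro i h1 h2 h3; exact HG i h1 h3
    | succ n ih =>
      intro i h1 h2 h3
      by_cases hA : i + G ≤ Z
      · exact HG i h1 hA
      · have e1 := HP (i - P) (by omega) (by omega)
        have e2 := ih (i - P) (by omega) (by omega) (by omega)
        have e3 := HP (i - P + G) (by omega) (by omega)
        rw [show i - P + P = i by omega] at e1
        rw [show i - P + G + P = i + G by omega] at e3
        exact (e1.symm.trans e2).trans e3
  intro i h1 h2
  exact key z i h1 h2 (by omega)

end Aux

section Triple
variable {α : Type*}

lemma triple {w : List α} {τ b c1 c2 c3 : ℕ} (hτ : 1 ≤ τ)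
    (hb1 : b ≤ c1) (hb3 : c3 < b + τ)
    (h12 : c1 < c2) (h23 : c2 < c3)
    (m1 : 2 * τ < MEPal w c1) (m2 : 2 * τ < MEPal w c2) (m3 : 2 * τ < MEPal w c3)
    (hno12 : ∀ x, b ≤ x → x < b + τ → 2 * τ < MEPal w x → x ≤ c1 ∨ c2 ≤ x)
    (hno23 : ∀ x, b ≤ x → x < b + τ → 2 * τ < MEPal w x → x ≤ c2 ∨ c3 ≤ x) :
    c2 - c1 = c3 - c2 := by
  obtain ⟨hc1τ, hc1len, P1⟩ := mepal_extract m1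
  obtain ⟨hc2τ, hc2len, P2⟩ := mepal_extract m2
  obtain ⟨hc3τ, hc3len, P3⟩ := mepal_extract m3
  set D1 := c2 - c1 with hD1def
  set D2 := c3 - c2 with hD2def
  set g := Nat.gcd D1 D2 with hgdef
  have hD1 : 0 < D1 := by omega
  have hD2 : 0 < D2 := by omega
  have hg1 : g ≤ D1 := Nat.gcd_le_left _ hD1
  have hg2 : g ≤ D2 := Nat.gcd_le_right _ hD2
  have hg : 0 < g := Nat.gcd_pos_of_pos_left _ hD1
  have hsum : D1 + D2 + 1 ≤ τ := by omega
  have per1 := two_pals_period hc1τ h12 P1 P2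
  have per2 := two_pals_period hc2τ h23 P2 P3
  -- periods rephrased on explicit windows
  have per1' : ∀ i, c1 - τ ≤ i → i + 2 * D1 ≤ c2 + τ → w[i]? = w[i + 2 * D1]? :=
    fun i hi1 hi2 => per1 i (by omega) (by omega)
  have per2' : ∀ i, c2 - τ ≤ i → i + 2 * D2 ≤ c3 + τ → w[i]? = w[i + 2 * D2]? :=
    fun i hi1 hi2 => per2 i (by omega) (by omega)
  have hgcd2 : Nat.gcd (2 * D1) (2 * D2) = 2 * g := Nat.gcd_mul_left 2 D1 D2
  have ovg : ∀ i, c2 - τ ≤ i → i + 2 * g ≤ c2 + τ → w[i]? = w[i + 2 * g]? := by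
    have := fw (fun i => w[i]?) (2 * D1 + 2 * D2) (2 * D1) (2 * D2) (c2 - τ) (c2 + τ)
      le_rfl (by omega) (by omega) (by omega)
      (fun i h1 h2 => per1' i (by omega) (by omega))
      (fun i h1 h2 => per2' i (by omega) (by omega))
    rw [hgcd2] at this
    exact this
  have leftg : ∀ i, c1 - τ ≤ i → i + 2 * g ≤ c2 + τ → w[i]? = w[i + 2 * g]? :=
    extL (fun i => w[i]?) (2 * D1) (2 * g) (c1 - τ) (c2 - τ) (c2 + τ)
      (by omega) (by omega) per1' ovg
  have rightg : ∀ i, c2 - τ ≤ i → i + 2 * g ≤ c3 + τ → w[i]? = w[i + 2 * g]? :=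
    extR (fun i => w[i]?) (2 * D2) (2 * g) (c2 - τ) (c3 + τ) (c2 + τ)
      (by omega) (by omega) (by omega) per2' ovg
  have fullg : ∀ i, c1 - τ ≤ i → i + 2 * g ≤ c3 + τ → w[i]? = w[i + 2 * g]? := by
    intro i h1 h2
    by_cases h : i + 2 * g ≤ c2 + τ
    · exact leftg i h1 h
    · exact rightg i (by omega) h2
  -- g = D2 : otherwise c2 + g would be a long center strictly between c2 and c3
  have hgd2 : g = D2 := by
    by_contra hne
    have hglt : g < D2 := by omega
    have key : ∀ s t : ℕ, s + t + 1 = 2 * (c2 + g) → c2 + g ≤ s →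
        s < c2 + g + (τ + 1) → w[s]? = w[t]? := by
      intro s t hst hs1 hs2
      have e1 : w[s - 2 * g]? = w[s]? := by
        have := fullg (s - 2 * g) (by omega) (by omega)
        rw [show s - 2 * g + 2 * g = s by omega] at this
        exact this
      have e2 : w[s - 2 * g]? = w[t]? :=
        P2 (s - 2 * g) t (by omega) (by omega) (by omega)
      exact e1.symm.trans e2
    have hpw : Pw w (c2 + g) (τ + 1) := by
      intro s t hst hs1 hs2
      rcases le_or_gt (c2 + g) s with h | h
      · exact key s t hst h hs2
      · exact (key t s (by omega) (by omega) (by omega)).symm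
    have hmem : 2 * τ < MEPal w (c2 + g) := mepal_intro (by omega) (by omega) hpw
    rcases hno23 (c2 + g) (by omega) (by omega) hmem with h | h <;> omega
  -- g = D1 : otherwise c2 - g would be a long center strictly between c1 and c2
  have hgd1 : g = D1 := by
    by_contra hne
    have hglt : g < D1 := by omega
    have key : ∀ s t : ℕ, s + t + 1 = 2 * (c2 - g) → c2 - g ≤ s + (τ + 1) →
        s < c2 - g → w[s]? = w[t]? := by
      intro s t hst hs1 hs2
      have e1 : w[s]? = w[s + 2 * g]? := fullg s (by omega) (by omega)
      have e2 : w[s + 2 * g]? = w[t]? :=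
        P2 (s + 2 * g) t (by omega) (by omega) (by omega)
      exact e1.trans e2
    have hpw : Pw w (c2 - g) (τ + 1) := by
      intro s t hst hs1 hs2
      rcases lt_or_ge s (c2 - g) with h | h
      · exact key s t hst hs1 h
      · exact (key t s (by omega) (by omega) (by omega)).symm
    have hmem : 2 * τ < MEPal w (c2 - g) := mepal_intro (by omega) (by omega) hpw
    rcases hno12 (c2 - g) (by omega) (by omega) hmem with h | h <;> omega
  omega

end Triple

theorem stmt7 {α : Type*} (w : List α) (τ b : ℕ) (hτ : 1 ≤ τ)
    (hB : b + τ ≤ w.length)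
    (L : Finset ℕ) (hL : L = (Finset.Ico b (b + τ)).filter (fun c => 2 * τ < MEPal w c))
    (hN : 3 ≤ L.card) :
    ∃ d : ℕ, ∀ i : ℕ, i + 1 < L.card →
      (L.sort (· ≤ ·))[i + 1]! - (L.sort (· ≤ ·))[i]! = d := by
  classical
  set l := L.sort (· ≤ ·) with hldef
  have hlen : l.length = L.card := Finset.length_sort _
  have hsorted : List.Pairwise (· < ·) l := (Finset.sortedLT_sort L).pairwise
  have hmono : ∀ i j (hi : i < l.length) (hj : j < l.length), i < j → l[i] < l[j] :=
    fun i j hi hj hij => List.pairwise_iff_getElem.1 hsorted i j hi hj hij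
  have hle : ∀ i j (hi : i < l.length) (hj : j < l.length), i ≤ j → l[i] ≤ l[j] := by
    intro i j hi hj hij
    rcases Nat.eq_or_lt_of_le hij with h | h
    · subst h; exact le_rfl
    · exact le_of_lt (hmono i j hi hj h)
  have hmemL : ∀ x : ℕ, x ∈ l ↔ (b ≤ x ∧ x < b + τ ∧ 2 * τ < MEPal w x) := by
    intro x
    rw [hldef, Finset.mem_sort, hL, Finset.mem_filter, Finset.mem_Ico]
    tauto
  have hbetween : ∀ u v : ℕ, (∀ j (hj : j < l.length), l[j] ≤ u ∨ v ≤ l[j]) →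
      ∀ x, b ≤ x → x < b + τ → 2 * τ < MEPal w x → x ≤ u ∨ v ≤ x := by
    intro u v hj x hx1 hx2 hx3
    obtain ⟨j, hjl, hjx⟩ := List.mem_iff_getElem.1 ((hmemL x).2 ⟨hx1, hx2, hx3⟩)
    rw [← hjx]
    exact hj j hjl
  have hgap : ∀ i (hi2 : i + 2 < l.length),
      l[i + 1]'(by omega) - l[i]'(by omega) = l[i + 2]'(by omega) - l[i + 1]'(by omega) := by
    intro i hi2
    have hp1 := (hmemL _).1 (List.getElem_mem (l := l) (n := i) (by omega))
    have hp2 := (hmemL _).1 (List.getElem_mem (l := l) (n := i + 1) (by omega))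
    have hp3 := (hmemL _).1 (List.getElem_mem (l := l) (n := i + 2) (by omega))
    refine triple hτ hp1.1 hp3.2.1 (hmono i (i+1) (by omega) (by omega) (by omega))
      (hmono (i+1) (i+2) (by omega) (by omega) (by omega)) hp1.2.2 hp2.2.2 hp3.2.2 ?_ ?_
    · refine hbetween _ _ ?_
      intro j hjl
      rcases le_or_gt j i with h | h
      · exact Or.inl (hle j i hjl (by omega) h)
      · exact Or.inr (hle (i+1) j (by omega) hjl h)
    · refine hbetween _ _ ?_
      intro j hjl
      rcases le_or_gt j (i+1) with h | h
      · exact Or.inl (hle j (i+1) hjl (by omega) h)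
      · exact Or.inr (hle (i+2) j (by omega) hjl h)
  have h2 : 2 ≤ l.length := by omega
  refine ⟨l[1]'(by omega) - l[0]'(by omega), ?_⟩
  have main : ∀ i (hi1 : i + 1 < l.length),
      l[i + 1]'(by omega) - l[i]'(by omega) = l[1]'(by omega) - l[0]'(by omega) := by
    intro i
    induction i with
    | zero => intro h; rfl
    | succ k ih =>
      intro h
      have hk2 : k + 2 < l.length := by omega
      have e1 := hgap k hk2
      have e2 := ih (by omega)
      show l[k + 2]'(by omega) - l[k + 1]'(by omega) = l[1]'(by omega) - l[0]'(by omega)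
      omega
  intro i hi
  have hi' : i + 1 < l.length := by omega
  rw [getElem!_pos l (i + 1) hi', getElem!_pos l i (by omega)]
  exact main i hi'
end

section
/- Let w be a string of length n and let 0 ≤ i ≤ j ≤ n−1 with j − i odd (so w[i..j] has even length). Define E[c] = c + MEPal_w[c]/2 − 1 if MEPal_w[c] > 0 and E[c] = c otherwise, for c ∈ [0..n−1]. Suppose w[i..j] has a nonempty even-length palindromic suffix, and let c_s = j + 1 − ℓ_s/2 be the center of its longest even-length palindromic suffix, where ℓ_s is that suffix's length. Let m = (i+j+1)/2. Then m ≤ c_s ≤ j, and: (1) E[k] < j for every k with m ≤ k < c_s; (2) E[c_s] ≥ j. -/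
lemma isPal_short {α : Type*} {l : List α} (h : l.length ≤ 1) : IsPal l := by
  match l, h with
  | [], _ => rfl
  | [a], _ => rfl

lemma pal_mid_s11 {α : Type*} {u : List α} (h : IsPal u) (d : ℕ) :
    IsPal ((u.drop d).take (u.length - 2*d)) := by
  unfold IsPal at *
  rcases le_or_gt u.length (2*d) with hL | hL
  · have e : u.length - 2*d = 0 := by omega
    simp [e]
  · rw [List.reverse_take, List.length_drop, List.reverse_drop, h, List.drop_take]
    congr 1
    · omega
    · congr 1
      omega

lemma pal_shrink {α : Type*} (w : List α) (c r r' : ℕ) (h1 : 1 ≤ r) (hrr : r ≤ r')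
    (hc : r' ≤ c) (hn : c + r' ≤ w.length)
    (hp : IsPal (factor w (c - r') (c + r' - 1))) :
    IsPal (factor w (c - r) (c + r - 1)) := by
  have hu := pal_mid_s11 hp (r' - r)
  have hlen : (factor w (c - r') (c + r' - 1)).length = 2 * r' := by
    simp only [factor, List.length_take, List.length_drop]
    omega
  have e : ((factor w (c - r') (c + r' - 1)).drop (r' - r)).take
      ((factor w (c - r') (c + r' - 1)).length - 2*(r' - r))
      = factor w (c - r) (c + r - 1) := by
    rw [hlen]
    show ((((w.drop (c - r')).take ((c + r' - 1) + 1 - (c - r'))).drop (r' - r)).take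
      (2*r' - 2*(r' - r))) = _
    rw [List.drop_take, List.drop_drop, List.take_take]
    show List.take _ (List.drop _ w) = (w.drop (c - r)).take ((c + r - 1) + 1 - (c - r))
    congr 1
    · omega
    · congr 1
      omega
  rwa [e] at hu

theorem stmt11 {α : Type*} (w : List α) (i j : ℕ)
    (hij : i ≤ j) (hj : j < w.length) (hodd : (j - i) % 2 = 1)
    (E : ℕ → ℕ)
    (hE : ∀ c, E c = if 0 < MEPal w c then c + MEPal w c / 2 - 1 else c)
    (ℓs : ℕ) (hpos : 0 < ℓs) (heven : ℓs % 2 = 0) (hlen : ℓs ≤ j + 1 - i)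
    (hpal : IsPal (factor w (j + 1 - ℓs) j))
    (hmax : ∀ ℓ : ℕ, ℓ % 2 = 0 → ℓ ≤ j + 1 - i →
      IsPal (factor w (j + 1 - ℓ) j) → ℓ ≤ ℓs) :
    (i + j + 1) / 2 ≤ j + 1 - ℓs / 2 ∧ j + 1 - ℓs / 2 ≤ j ∧
    (∀ k, (i + j + 1) / 2 ≤ k → k < j + 1 - ℓs / 2 → E k < j) ∧
    j ≤ E (j + 1 - ℓs / 2) := by
  have h2 : 2 ≤ ℓs := by omega
  have hℓj : ℓs ≤ j + 1 := by omega
  set cs := j + 1 - ℓs / 2 with hcs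
  have Sbdd : ∀ c : ℕ, BddAbove {r : ℕ | r ≤ c ∧ c + r ≤ w.length ∧
      IsPal (factor w (c - r) (c + r - 1))} := fun c => ⟨c, fun r hr => hr.1⟩
  have S0 : ∀ c : ℕ, c ≤ w.length → (0 : ℕ) ∈ {r : ℕ | r ≤ c ∧ c + r ≤ w.length ∧
      IsPal (factor w (c - r) (c + r - 1))} := by
    intro c hc
    refine ⟨Nat.zero_le _, by omega, ?_⟩
    apply isPal_short
    simp only [factor, List.length_take, List.length_drop]
    omega
  refine ⟨by omega, by omega, ?_, ?_⟩
  · -- part (1)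
    intro k hk1 hk2
    by_contra hcon
    push_neg at hcon
    have hkn : k ≤ w.length := by omega
    have hmem := Nat.sSup_mem ⟨0, S0 k hkn⟩ (Sbdd k)
    obtain ⟨hR1, hR2, hR3⟩ := hmem
    set R := sSup {r : ℕ | r ≤ k ∧ k + r ≤ w.length ∧
      IsPal (factor w (k - r) (k + r - 1))} with hRdef
    have hMk : MEPal w k = 2 * R := rfl
    have hEk := hE k
    rcases Nat.eq_zero_or_pos (MEPal w k) with h0 | hpos'
    · rw [h0] at hEk
      simp at hEk
      omega
    · rw [if_pos hpos', hMk] at hEk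
      have hRpos : 1 ≤ R := by omega
      have hRge : j + 1 - k ≤ R := by omega
      have hr1 : 1 ≤ j + 1 - k := by omega
      have hps := pal_shrink w k (j + 1 - k) R hr1 hRge hR1 hR2 hR3
      have efac : factor w (j + 1 - 2 * (j + 1 - k)) j
          = factor w (k - (j + 1 - k)) (k + (j + 1 - k) - 1) := by
        congr 1 <;> omega
      have := hmax (2 * (j + 1 - k)) (by omega) (by omega) (by rw [efac]; exact hps)
      omega
  · -- part (2)
    have hcsn : cs ≤ w.length := by omega
    have hmem : ℓs / 2 ∈ {r : ℕ | r ≤ cs ∧ cs + r ≤ w.length ∧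
        IsPal (factor w (cs - r) (cs + r - 1))} := by
      refine ⟨by omega, by omega, ?_⟩
      have e1 : cs - ℓs / 2 = j + 1 - ℓs := by omega
      have e2 : cs + ℓs / 2 - 1 = j := by omega
      rw [e1, e2]
      exact hpal
    have hle := le_csSup (Sbdd cs) hmem
    have hM : MEPal w cs = 2 * sSup {r : ℕ | r ≤ cs ∧ cs + r ≤ w.length ∧
        IsPal (factor w (cs - r) (cs + r - 1))} := rfl
    have hpos' : 0 < MEPal w cs := by omega
    rw [hE, if_pos hpos', hM]
    omega
end
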